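/- arXiv:2311.03238 — 2 statements merged into one kernel-verified Lean document; each statement's English description precedes it below -/
import Mathlib

section
/- Let f be integrable on a ball B_R(x_0) and suppose there exist constants C > 0 and α ∈ (0,1] such that for every r ∈ (0,R] and every x ∈ B_{R/2}(x_0), the average over B_r(x) ∩ B_R(x_0) of |f - (f)_{B_r(x)∩B_R(x_0)}| is at most C r^α. Then for Lebesgue-a.e. x, y ∈ B_{R/4}(x_0), |f(x) - f(y)| ≤ C' |x-y|^α with C' depending only on C, n, α. -/
open MeasureTheory Metric
open Filter Topology

lemma rpow_pow_aux (α : ℝ) (k : ℕ) : ((1/2:ℝ)^k) ^ α = ((1/2:ℝ)^α)^k := by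
  rw [← Real.rpow_natCast (1/2:ℝ) k, ← Real.rpow_natCast ((1/2:ℝ)^α) k,
    ← Real.rpow_mul (by norm_num), ← Real.rpow_mul (by norm_num), mul_comm]

lemma restrict_cb {n : ℕ} (x : EuclideanSpace ℝ (Fin n)) {r : ℝ} (hr : 0 < r) :
    (volume : Measure (EuclideanSpace ℝ (Fin n))).restrict (closedBall x r)
      = volume.restrict (ball x r) := by
  apply Measure.restrict_congr_set
  rw [MeasureTheory.ae_eq_set]
  constructor
  · rw [closedBall_diff_ball]
    exact Measure.addHaar_sphere_of_ne_zero _ _ hr.ne'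
  · rw [Set.diff_eq_empty.2 ball_subset_closedBall]; simp

lemma measure_ball_double {n : ℕ} (x : EuclideanSpace ℝ (Fin n)) (r : ℝ) :
    (volume (ball x (2*r))).toReal = 2^n * (volume (ball x r)).toReal := by
  rw [Measure.addHaar_ball_mul_of_pos volume x two_pos r,
    Measure.addHaar_ball_center volume x r, ENNReal.toReal_mul,
    ENNReal.toReal_ofReal (by positivity), finrank_euclideanSpace_fin]

lemma measure_ball_center_eq {n : ℕ} (x y : EuclideanSpace ℝ (Fin n)) (r : ℝ) :
    volume (ball x r) = volume (ball y r) := by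
  rw [Measure.addHaar_ball_center volume x r, Measure.addHaar_ball_center volume y r]

/-- Average comparison: if `s ⊆ t` and `μ t ≤ D * μ s` (in `toReal`), the average of `g`
over `s` differs from the average over `t` by at most `D` times the mean oscillation on `t`. -/
lemma avg_cmp {X : Type*} [MeasurableSpace X] {μ : Measure X} {g : X → ℝ}
    {s t : Set X} {D : ℝ}
    (hst : s ⊆ t) (hs0 : μ s ≠ 0) (htfin : μ t ≠ ⊤)
    (hint : IntegrableOn g t μ)
    (hD : (μ t).toReal ≤ D * (μ s).toReal) :
    |(⨍ y in s, g y ∂μ) - ⨍ z in t, g z ∂μ| ≤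
      D * ⨍ z in t, |g z - ⨍ w in t, g w ∂μ| ∂μ := by
  set c := ⨍ z in t, g z ∂μ with hc
  have hsfin : μ s ≠ ⊤ := ((measure_mono hst).trans_lt htfin.lt_top).ne
  have hs_pos : 0 < (μ s).toReal := ENNReal.toReal_pos hs0 hsfin
  have ht_pos : 0 < (μ t).toReal :=
    hs_pos.trans_le (ENNReal.toReal_mono htfin (measure_mono hst))
  have hints : IntegrableOn g s μ := hint.mono_set hst
  have hintc : IntegrableOn (fun y => g y - c) t μ :=
    hint.sub (integrableOn_const htfin)
  have hintabs : IntegrableOn (fun y => |g y - c|) t μ := hintc.abs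
  have h1 : (⨍ y in s, g y ∂μ) - c = (μ s).toReal⁻¹ • ∫ y in s, (g y - c) ∂μ := by
    rw [integral_sub hints (integrableOn_const hsfin),
      setIntegral_const, setAverage_eq, measureReal_def, smul_sub, smul_smul,
      inv_mul_cancel₀ hs_pos.ne', one_smul]
  have h2 : |(⨍ y in s, g y ∂μ) - c| ≤ (μ s).toReal⁻¹ * ∫ y in s, |g y - c| ∂μ := by
    rw [h1, smul_eq_mul, abs_mul, abs_of_nonneg (inv_nonneg.2 hs_pos.le)]
    refine mul_le_mul_of_nonneg_left ?_ (inv_nonneg.2 hs_pos.le)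
    simpa [Real.norm_eq_abs] using
      norm_integral_le_integral_norm (μ := μ.restrict s) (fun y => g y - c)
  have h3 : ∫ y in s, |g y - c| ∂μ ≤ ∫ y in t, |g y - c| ∂μ :=
    setIntegral_mono_set hintabs
      (Filter.Eventually.of_forall fun y => abs_nonneg _)
      (HasSubset.Subset.eventuallyLE hst)
  have h4 : ∫ y in t, |g y - c| ∂μ = (μ t).toReal * ⨍ z in t, |g z - c| ∂μ := by
    rw [setAverage_eq, measureReal_def, smul_eq_mul, ← mul_assoc, mul_inv_cancel₀ ht_pos.ne', one_mul]
  have h5 : (0:ℝ) ≤ ⨍ z in t, |g z - c| ∂μ := by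
    rw [setAverage_eq, smul_eq_mul]
    exact mul_nonneg (inv_nonneg.2 ht_pos.le)
      (integral_nonneg fun y => abs_nonneg _)
  have h6 : (μ s).toReal⁻¹ * (μ t).toReal ≤ D := by
    rw [inv_mul_le_iff₀ hs_pos, mul_comm]
    exact hD
  calc |(⨍ y in s, g y ∂μ) - c| ≤ (μ s).toReal⁻¹ * ∫ y in s, |g y - c| ∂μ := h2
    _ ≤ (μ s).toReal⁻¹ * ∫ y in t, |g y - c| ∂μ :=
        mul_le_mul_of_nonneg_left h3 (inv_nonneg.2 hs_pos.le)
    _ = ((μ s).toReal⁻¹ * (μ t).toReal) * ⨍ z in t, |g z - c| ∂μ := by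
        rw [h4, mul_assoc]
    _ ≤ D * ⨍ z in t, |g z - c| ∂μ := mul_le_mul_of_nonneg_right h6 h5

theorem campanato_holder (n : ℕ) (C α : ℝ) (hC : 0 < C) (hα : α ∈ Set.Ioc (0:ℝ) 1) :
    ∃ C' : ℝ, 0 < C' ∧
      ∀ (f : EuclideanSpace ℝ (Fin n) → ℝ) (x₀ : EuclideanSpace ℝ (Fin n)) (R : ℝ),
        0 < R → IntegrableOn f (ball x₀ R) volume →
        (∀ r ∈ Set.Ioc (0:ℝ) R, ∀ x ∈ ball x₀ (R / 2),
          ⨍ y in ball x r ∩ ball x₀ R,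
              |f y - ⨍ z in ball x r ∩ ball x₀ R, f z ∂volume| ∂volume ≤ C * r ^ α) →
        ∀ᵐ x ∂(volume.restrict (ball x₀ (R / 4))),
          ∀ᵐ y ∂(volume.restrict (ball x₀ (R / 4))),
            |f x - f y| ≤ C' * ‖x - y‖ ^ α := by
  obtain ⟨hα0, hα1⟩ := hα
  set q : ℝ := (1/2 : ℝ) ^ α with hq
  have hq0 : 0 < q := Real.rpow_pos_of_pos (by norm_num) α
  have hq1 : q < 1 := Real.rpow_lt_one (by norm_num) (by norm_num) hα0
  have h1q : 0 < 1 - q := by linarith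
  have h2α : (0:ℝ) < (2:ℝ) ^ α := Real.rpow_pos_of_pos (by norm_num) α
  refine ⟨C * (2 * 2^n * (1-q)⁻¹ + 2 * 2^n * (2:ℝ)^α), by positivity, ?_⟩
  intro f x₀ R hR hf hcamp
  set g : EuclideanSpace ℝ (Fin n) → ℝ := (ball x₀ R).indicator f with hgdef
  have hg : Integrable g volume :=
    (integrable_indicator_iff measurableSet_ball).2 hf
  have hgloc : LocallyIntegrable g volume := hg.locallyIntegrable
  have havg : ∀ s : Set (EuclideanSpace ℝ (Fin n)), MeasurableSet s → s ⊆ ball x₀ R →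
      (⨍ z in s, g z ∂volume) = ⨍ z in s, f z ∂volume := by
    intro s hms hs
    rw [setAverage_eq, setAverage_eq]
    congr 1
    exact setIntegral_congr_fun hms fun z hz => Set.indicator_of_mem (hs hz) f
  -- the key telescoping estimate
  have key : ∀ x ∈ ball x₀ (R/4), ∀ d : ℝ, 0 < d → d < R/2 →
      Tendsto (fun k : ℕ => ⨍ z in closedBall x (d * (1/2)^k), g z ∂volume) atTop (𝓝 (g x)) →
      |f x - ⨍ z in ball x d, f z ∂volume| ≤ 2^n * C * (1-q)⁻¹ * d ^ α := by
    intro x hx d hd0 hdR hlim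
    have hxR : x ∈ ball x₀ R := ball_subset_ball (by linarith) hx
    have hx2 : x ∈ ball x₀ (R/2) := ball_subset_ball (by linarith) hx
    have hrk_pos : ∀ k : ℕ, 0 < d * (1/2:ℝ)^k := fun k => by positivity
    have hrk_le : ∀ k : ℕ, d * (1/2:ℝ)^k ≤ d := fun k => by
      nlinarith [pow_le_one₀ (by norm_num : (0:ℝ) ≤ 1/2) (by norm_num : (1/2:ℝ) ≤ 1) (n := k),
        hrk_pos k]
    have hsubR : ∀ k : ℕ, ball x (d * (1/2:ℝ)^k) ⊆ ball x₀ R := by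
      intro k z hz
      have h1 : dist z x < d * (1/2:ℝ)^k := mem_ball.1 hz
      have h2 : dist x x₀ < R/4 := mem_ball.1 hx
      have := dist_triangle z x x₀
      have := hrk_le k
      rw [mem_ball]
      linarith
    set a : ℕ → ℝ := fun k => ⨍ z in ball x (d * (1/2:ℝ)^k), f z ∂volume with ha
    have hstep : ∀ k : ℕ, dist (a k) (a (k+1)) ≤ (2^n * C * d^α) * q ^ k := by
      intro k
      have heq2 : d * (1/2:ℝ)^k = 2 * (d * (1/2:ℝ)^(k+1)) := by ring
      have hmeas : (volume (ball x (d * (1/2:ℝ)^k))).toReal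
          ≤ 2^n * (volume (ball x (d * (1/2:ℝ)^(k+1)))).toReal := by
        rw [heq2, measure_ball_double]
      have hsub : ball x (d * (1/2:ℝ)^(k+1)) ⊆ ball x (d * (1/2:ℝ)^k) :=
        ball_subset_ball (by rw [heq2]; nlinarith [hrk_pos (k+1)])
      have hcmp := avg_cmp (μ := volume) (g := f) hsub
        (measure_ball_pos volume x (hrk_pos (k+1))).ne'
        measure_ball_lt_top.ne (hf.mono_set (hsubR k)) hmeas
      have hosc := hcamp (d * (1/2:ℝ)^k) ⟨hrk_pos k, (hrk_le k).trans (by linarith)⟩ x hx2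
      rw [Set.inter_eq_left.2 (hsubR k)] at hosc
      have hring : C * (d * (1/2:ℝ)^k) ^ α = C * d^α * q^k := by
        rw [Real.mul_rpow hd0.le (by positivity), rpow_pow_aux, hq]; ring
      have : dist (a k) (a (k+1)) = |a (k+1) - a k| := by
        rw [Real.dist_eq, abs_sub_comm]
      rw [this]
      calc |a (k+1) - a k| ≤ 2^n * ⨍ z in ball x (d * (1/2:ℝ)^k),
            |f z - ⨍ w in ball x (d * (1/2:ℝ)^k), f w ∂volume| ∂volume := hcmp
        _ ≤ 2^n * (C * (d * (1/2:ℝ)^k) ^ α) := by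
            refine mul_le_mul_of_nonneg_left hosc (by positivity)
        _ = (2^n * C * d^α) * q ^ k := by rw [hring]; ring
    have hlim' : Tendsto a atTop (𝓝 (f x)) := by
      have hfx : g x = f x := Set.indicator_of_mem hxR f
      have haeq : ∀ k : ℕ, (⨍ z in closedBall x (d * (1/2:ℝ)^k), g z ∂volume) = a k := by
        intro k
        rw [ha]
        have h1 : (⨍ z in closedBall x (d * (1/2:ℝ)^k), g z ∂volume)
            = ⨍ z in ball x (d * (1/2:ℝ)^k), g z ∂volume := by
          rw [restrict_cb x (hrk_pos k)]
        rw [h1, havg _ measurableSet_ball (hsubR k)]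
      rw [← hfx]
      exact Tendsto.congr haeq hlim
    have hsum : Summable (fun k : ℕ => (2^n * C * d^α) * q ^ k) :=
      (summable_geometric_of_lt_one hq0.le hq1).mul_left _
    have hdist := dist_le_tsum_of_dist_le_of_tendsto₀ _ hstep hsum hlim'
    have htsum : ∑' k : ℕ, (2^n * C * d^α) * q ^ k = (2^n * C * d^α) * (1-q)⁻¹ := by
      rw [tsum_mul_left, tsum_geometric_of_lt_one hq0.le hq1]
    have ha0 : a 0 = ⨍ z in ball x d, f z ∂volume := by
      rw [ha]; norm_num
    rw [htsum, ha0] at hdist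
    calc |f x - ⨍ z in ball x d, f z ∂volume|
        = dist (⨍ z in ball x d, f z ∂volume) (f x) := by rw [Real.dist_eq, abs_sub_comm]
      _ ≤ (2^n * C * d^α) * (1-q)⁻¹ := hdist
      _ = 2^n * C * (1-q)⁻¹ * d^α := by ring
  -- Lebesgue differentiation points
  have hleb := IsUnifLocDoublingMeasure.ae_tendsto_average (μ := volume) hgloc 1
  rw [MeasureTheory.ae_restrict_iff' measurableSet_ball]
  filter_upwards [hleb] with x hx
  intro hxmem
  rw [MeasureTheory.ae_restrict_iff' measurableSet_ball]
  filter_upwards [hleb] with y hy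
  intro hymem
  rcases eq_or_ne x y with rfl | hxy
  · have : ‖x - x‖ = 0 := by simp
    rw [this, Real.zero_rpow hα0.ne', sub_self, abs_zero, mul_zero]
  set d : ℝ := ‖x - y‖ with hd
  have hd0 : 0 < d := by
    rw [hd]
    exact norm_sub_pos_iff.mpr hxy
  have hdxy : dist x y = d := by rw [hd, dist_eq_norm]
  have hdR : d < R/2 := by
    have h1 : dist x x₀ < R/4 := mem_ball.1 hxmem
    have h2 : dist x₀ y < R/4 := by
      rw [dist_comm]; exact mem_ball.1 hymem
    have := dist_triangle x x₀ y
    linarith [hdxy ▸ this]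
  -- limits at x and y along radii d * (1/2)^k
  have hδ : Tendsto (fun k : ℕ => d * (1/2:ℝ)^k) atTop (𝓝[>] 0) := by
    rw [tendsto_nhdsWithin_iff]
    constructor
    · simpa using (tendsto_pow_atTop_nhds_zero_of_lt_one (by norm_num : (0:ℝ) ≤ 1/2)
        (by norm_num)).const_mul d
    · exact Eventually.of_forall fun k => Set.mem_Ioi.2 (by positivity)
  have hlimx : Tendsto (fun k : ℕ => ⨍ z in closedBall x (d * (1/2:ℝ)^k), g z ∂volume)
      atTop (𝓝 (g x)) :=
    hx (fun _ => x) (fun k => d * (1/2:ℝ)^k) hδ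
      (Eventually.of_forall fun k => mem_closedBall_self (by positivity))
  have hlimy : Tendsto (fun k : ℕ => ⨍ z in closedBall y (d * (1/2:ℝ)^k), g z ∂volume)
      atTop (𝓝 (g y)) :=
    hy (fun _ => y) (fun k => d * (1/2:ℝ)^k) hδ
      (Eventually.of_forall fun k => mem_closedBall_self (by positivity))
  have hkx := key x hxmem d hd0 hdR hlimx
  have hky := key y hymem d hd0 hdR hlimy
  -- compare averages over ball x d, ball y d with the set t = ball x (2d) ∩ ball x₀ R
  set t : Set (EuclideanSpace ℝ (Fin n)) := ball x (2*d) ∩ ball x₀ R with ht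
  have hx2 : x ∈ ball x₀ (R/2) := ball_subset_ball (by linarith) hxmem
  have hsubx : ball x d ⊆ t := by
    intro z hz
    have h1 : dist z x < d := mem_ball.1 hz
    have h2 : dist x x₀ < R/4 := mem_ball.1 hxmem
    refine ⟨mem_ball.2 (by linarith), mem_ball.2 ?_⟩
    have := dist_triangle z x x₀
    linarith
  have hsuby : ball y d ⊆ t := by
    intro z hz
    have h1 : dist z y < d := mem_ball.1 hz
    have h2 : dist y x₀ < R/4 := mem_ball.1 hymem
    have h3 : dist y x = d := by rw [dist_comm, hdxy]
    refine ⟨mem_ball.2 ?_, mem_ball.2 ?_⟩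
    · have := dist_triangle z y x
      linarith
    · have := dist_triangle z y x₀
      linarith
  have htfin : volume t ≠ ⊤ :=
    ((measure_mono Set.inter_subset_left).trans_lt measure_ball_lt_top).ne
  have htmeasx : (volume t).toReal ≤ 2^n * (volume (ball x d)).toReal := by
    rw [← measure_ball_double x d]
    exact ENNReal.toReal_mono measure_ball_lt_top.ne
      (measure_mono Set.inter_subset_left)
  have htmeasy : (volume t).toReal ≤ 2^n * (volume (ball y d)).toReal := by
    rw [measure_ball_center_eq y x d]; exact htmeasx
  have hft : IntegrableOn f t volume := hf.mono_set Set.inter_subset_right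
  have hosc2 := hcamp (2*d) ⟨by positivity, by linarith⟩ x hx2
  rw [← ht] at hosc2
  have hcmpx := avg_cmp (μ := volume) (g := f) hsubx
    (measure_ball_pos volume x hd0).ne' htfin hft htmeasx
  have hcmpy := avg_cmp (μ := volume) (g := f) hsuby
    (measure_ball_pos volume y hd0).ne' htfin hft htmeasy
  have h2d : C * (2*d) ^ α = C * (2:ℝ)^α * d^α := by
    rw [Real.mul_rpow (by norm_num) hd0.le]; ring
  have hbx : |(⨍ z in ball x d, f z ∂volume) - ⨍ z in t, f z ∂volume|
      ≤ 2^n * (C * (2:ℝ)^α * d^α) := by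
    calc |(⨍ z in ball x d, f z ∂volume) - ⨍ z in t, f z ∂volume|
        ≤ 2^n * ⨍ z in t, |f z - ⨍ w in t, f w ∂volume| ∂volume := hcmpx
      _ ≤ 2^n * (C * (2*d) ^ α) := mul_le_mul_of_nonneg_left hosc2 (by positivity)
      _ = 2^n * (C * (2:ℝ)^α * d^α) := by rw [h2d]
  have hby : |(⨍ z in ball y d, f z ∂volume) - ⨍ z in t, f z ∂volume|
      ≤ 2^n * (C * (2:ℝ)^α * d^α) := by
    calc |(⨍ z in ball y d, f z ∂volume) - ⨍ z in t, f z ∂volume|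
        ≤ 2^n * ⨍ z in t, |f z - ⨍ w in t, f w ∂volume| ∂volume := hcmpy
      _ ≤ 2^n * (C * (2*d) ^ α) := mul_le_mul_of_nonneg_left hosc2 (by positivity)
      _ = 2^n * (C * (2:ℝ)^α * d^α) := by rw [h2d]
  have hfinal : |f x - f y| ≤
      2 * (2^n * C * (1-q)⁻¹ * d^α) + 2 * (2^n * (C * (2:ℝ)^α * d^α)) := by
    have e1 := abs_sub_abs_le_abs_sub (f x) (f y)
    set A := ⨍ z in ball x d, f z ∂volume
    set B := ⨍ z in ball y d, f z ∂volume
    set M := ⨍ z in t, f z ∂volume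
    have : |f x - f y| ≤ |f x - A| + |A - M| + |M - B| + |B - f y| := by
      have t1 : f x - f y = (f x - A) + (A - M) + (M - B) + (B - f y) := by ring
      rw [t1]
      calc |(f x - A) + (A - M) + (M - B) + (B - f y)|
          ≤ |(f x - A) + (A - M) + (M - B)| + |B - f y| := abs_add_le _ _
        _ ≤ |(f x - A) + (A - M)| + |M - B| + |B - f y| := by
            gcongr; exact abs_add_le _ _
        _ ≤ |f x - A| + |A - M| + |M - B| + |B - f y| := by
            gcongr; exact abs_add_le _ _
    have hMB : |M - B| ≤ 2^n * (C * (2:ℝ)^α * d^α) := by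
      rw [abs_sub_comm]; exact hby
    have hBf : |B - f y| ≤ 2^n * C * (1-q)⁻¹ * d^α := by
      rw [abs_sub_comm]; exact hky
    linarith [hkx, hbx]
  have hdα : (0:ℝ) ≤ d ^ α := Real.rpow_nonneg (by positivity) α
  calc |f x - f y| ≤ 2 * (2^n * C * (1-q)⁻¹ * d^α) + 2 * (2^n * (C * (2:ℝ)^α * d^α)) := hfinal
    _ = C * (2 * 2^n * (1-q)⁻¹ + 2 * 2^n * (2:ℝ)^α) * d^α := by ring
    _ = C * (2 * 2^n * (1-q)⁻¹ + 2 * 2^n * (2:ℝ)^α) * ‖x - y‖ ^ α := by rw [← hd]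
end

section
/- Let f be a nonnegative measurable function on a ball B in R^n and suppose there exist constants θ ∈ (0,1) and M ≥ 0 such that for every ball B' ⊂ B, the mean of f over B' is at most θ times the essential supremum of f over B' plus M. Then the essential supremum of f over B is at most M/(1-θ), provided f is essentially bounded on B. -/
open MeasureTheory Metric

theorem essSup_le_of_mean_bound (n : ℕ) (x₀ : EuclideanSpace ℝ (Fin n)) (R : ℝ)
    (hR : 0 < R) (f : EuclideanSpace ℝ (Fin n) → ℝ) (hmeas : Measurable f)
    (hnonneg : ∀ x, 0 ≤ f x) (θ M : ℝ) (hθ : θ ∈ Set.Ioo (0:ℝ) 1) (hM : 0 ≤ M)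
    (hbdd : MemLp f ⊤ (volume.restrict (ball x₀ R)))
    (h : ∀ (x : EuclideanSpace ℝ (Fin n)) (r : ℝ), 0 < r → ball x r ⊆ ball x₀ R →
      ⨍ y in ball x r, f y ∂volume ≤
        θ * (eLpNormEssSup f (volume.restrict (ball x r))).toReal + M) :
    (eLpNormEssSup f (volume.restrict (ball x₀ R))).toReal ≤ M / (1 - θ) := by
  obtain ⟨hθ0, hθ1⟩ := hθ
  set C : ℝ := (eLpNormEssSup f (volume.restrict (ball x₀ R))).toReal with hC
  have hCtop : eLpNormEssSup f (volume.restrict (ball x₀ R)) ≠ ⊤ := by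
    have := hbdd.2
    rw [eLpNorm_exponent_top] at this
    exact this.ne
  have hC0 : 0 ≤ C := ENNReal.toReal_nonneg
  -- f is integrable on the ball
  haveI : IsFiniteMeasure (volume.restrict (ball x₀ R)) :=
    ⟨by rw [Measure.restrict_apply_univ]; exact measure_ball_lt_top⟩
  have hint : IntegrableOn f (ball x₀ R) volume :=
    memLp_one_iff_integrable.mp (hbdd.mono_exponent le_top)
  set g : EuclideanSpace ℝ (Fin n) → ℝ := (ball x₀ R).indicator f with hg
  have hgint : Integrable g volume := hint.integrable_indicator measurableSet_ball
  have hgloc : LocallyIntegrable g volume := hgint.locallyIntegrable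
  -- key pointwise bound
  have key : ∀ᵐ x ∂(volume.restrict (ball x₀ R)), f x ≤ θ * C + M := by
    have hld := IsUnifLocDoublingMeasure.ae_tendsto_average (μ := (volume :
      Measure (EuclideanSpace ℝ (Fin n)))) hgloc 1
    filter_upwards [ae_restrict_of_ae hld, ae_restrict_mem measurableSet_ball] with x hx hxB
    have hδ : (0:ℝ) < R - dist x x₀ := by
      rw [mem_ball] at hxB; linarith
    have htend : Filter.Tendsto (fun r => ⨍ y in closedBall x r, g y ∂volume)
        (nhdsWithin 0 (Set.Ioi 0)) (nhds (g x)) := by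
      refine hx (fun _ => x) id Filter.tendsto_id ?_
      filter_upwards [self_mem_nhdsWithin] with r hr
      exact mem_closedBall_self (by simp at hr ⊢; linarith)
    have hgx : g x = f x := Set.indicator_of_mem hxB f
    rw [hgx] at htend
    refine le_of_tendsto htend ?_
    filter_upwards [Ioo_mem_nhdsGT_of_mem (Set.mem_Ico.mpr ⟨le_refl (0:ℝ), hδ⟩)] with r hr
    obtain ⟨hr0, hrδ⟩ := hr
    have hsub : closedBall x r ⊆ ball x₀ R :=
      closedBall_subset_ball' (by linarith)
    have hbsub : ball x r ⊆ ball x₀ R := ball_subset_closedBall.trans hsub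
    have h1 : ⨍ y in closedBall x r, g y ∂volume = ⨍ y in closedBall x r, f y ∂volume := by
      refine setAverage_congr_fun measurableSet_closedBall ?_
      exact Filter.Eventually.of_forall fun y hy => Set.indicator_of_mem (hsub hy) f
    have hae : (closedBall x r : Set (EuclideanSpace ℝ (Fin n))) =ᵐ[volume] ball x r := by
      refine MeasureTheory.ae_eq_set.mpr ⟨?_, ?_⟩
      · rw [closedBall_diff_ball]
        exact MeasureTheory.Measure.addHaar_sphere_of_ne_zero _ _ hr0.ne'
      · simp [Set.diff_eq_empty.mpr ball_subset_closedBall]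
    have h2 : ⨍ y in closedBall x r, f y ∂volume = ⨍ y in ball x r, f y ∂volume :=
      setAverage_congr hae
    have h3 := h x r hr0 hbsub
    have hmono : eLpNormEssSup f (volume.restrict (ball x r)) ≤
        eLpNormEssSup f (volume.restrict (ball x₀ R)) :=
      eLpNormEssSup_mono_measure f
        ((Measure.restrict_mono hbsub le_rfl).absolutelyContinuous)
    have h4 : (eLpNormEssSup f (volume.restrict (ball x r))).toReal ≤ C :=
      ENNReal.toReal_mono hCtop hmono
    rw [h1, h2]
    calc ⨍ y in ball x r, f y ∂volume
        ≤ θ * (eLpNormEssSup f (volume.restrict (ball x r))).toReal + M := h3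
      _ ≤ θ * C + M := by nlinarith
  -- conclude
  have hbound : eLpNormEssSup f (volume.restrict (ball x₀ R)) ≤ ENNReal.ofReal (θ * C + M) := by
    refine eLpNormEssSup_le_of_ae_bound ?_
    filter_upwards [key] with x hx
    rwa [Real.norm_eq_abs, abs_of_nonneg (hnonneg x)]
  have hCle : C ≤ θ * C + M := by
    have := ENNReal.toReal_mono ENNReal.ofReal_ne_top hbound
    rwa [ENNReal.toReal_ofReal (by nlinarith)] at this
  rw [le_div_iff₀ (by linarith)]
  nlinarith
end
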